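/- For every σ > 0 and every multi-index ν ≠ 0 with |ν| = v ≥ 1, the bound ∑_{λ=1}^{v} σ^λ ∑_{k=1}^{λ} (−1)^{λ+k}(v+2k−1)!/((2k−1)!(λ−k)!k!) ≤ v!·e^{v + σe² + σ − 1} holds. -/

import Mathlib

open Finset Real

private lemma choose_le_exp (n m : ℕ) : (n.choose m : ℝ) ≤ Real.exp n := by
  have h1 : n.choose m ≤ 2 ^ n := by
    calc n.choose m ≤ ∑ i ∈ Finset.range (n+1), n.choose i := by
          by_cases h : m ≤ n
          · exact Finset.single_le_sum (fun i _ => Nat.zero_le _)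
              (Finset.mem_range.2 (Nat.lt_succ_of_le h))
          · simp [Nat.choose_eq_zero_of_lt (lt_of_not_ge h)]
      _ = 2 ^ n := Nat.sum_range_choose n
  have h2 : (2:ℝ) ≤ Real.exp 1 := by
    have := Real.add_one_le_exp (1:ℝ); linarith
  calc (n.choose m : ℝ) ≤ (2:ℝ) ^ n := by exact_mod_cast h1
    _ ≤ Real.exp 1 ^ n := pow_le_pow_left₀ (by norm_num) h2 n
    _ = Real.exp n := Real.exp_one_pow n

theorem double_sum_exp_bound (σ : ℝ) (hσ : 0 < σ) (v : ℕ) (hv : 1 ≤ v) :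
    ∑ lam ∈ Finset.Icc 1 v, σ ^ lam *
        ∑ k ∈ Finset.Icc 1 lam,
          (-1 : ℝ) ^ (lam + k) * ((v + 2 * k - 1).factorial : ℝ) /
            (((2 * k - 1).factorial : ℝ) * ((lam - k).factorial : ℝ) * (k.factorial : ℝ))
      ≤ (v.factorial : ℝ) *
        Real.exp ((v : ℝ) + σ * Real.exp 1 ^ 2 + σ - 1) := by
  set a : ℕ → ℝ := fun k => (σ * Real.exp 1 ^ 2) ^ k / (k.factorial : ℝ) with ha
  set b : ℕ → ℝ := fun l => σ ^ l / (l.factorial : ℝ) with hb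
  have hE2pos : (0:ℝ) < σ * Real.exp 1 ^ 2 :=
    mul_pos hσ (pow_pos (Real.exp_pos 1) 2)
  have ha0 : ∀ k, 0 ≤ a k := fun k =>
    div_nonneg (pow_nonneg hE2pos.le k) (Nat.cast_nonneg _)
  have hb0 : ∀ l, 0 ≤ b l := fun l =>
    div_nonneg (pow_nonneg hσ.le l) (Nat.cast_nonneg _)
  -- Step 1: termwise bound
  have key : ∀ lam ∈ Finset.Icc 1 v, ∀ k ∈ Finset.Icc 1 lam,
      σ ^ lam * ((-1 : ℝ) ^ (lam + k) * ((v + 2 * k - 1).factorial : ℝ) /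
          (((2 * k - 1).factorial : ℝ) * ((lam - k).factorial : ℝ) * (k.factorial : ℝ)))
        ≤ (v.factorial : ℝ) * Real.exp ((v:ℝ) - 1) * (a k * b (lam - k)) := by
    intro lam hlam k hk
    rw [Finset.mem_Icc] at hlam hk
    obtain ⟨hk1, hklam⟩ := hk
    obtain ⟨hlam1, hlamv⟩ := hlam
    set D1 : ℝ := ((2 * k - 1).factorial : ℝ)
    set D2 : ℝ := (((lam - k).factorial : ℝ))
    set D3 : ℝ := ((k.factorial : ℝ))
    have hD1 : (0:ℝ) < D1 := Nat.cast_pos.2 (Nat.factorial_pos _)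
    have hD2 : (0:ℝ) < D2 := Nat.cast_pos.2 (Nat.factorial_pos _)
    have hD3 : (0:ℝ) < D3 := Nat.cast_pos.2 (Nat.factorial_pos _)
    set F : ℝ := ((v + 2 * k - 1).factorial : ℝ)
    have hF0 : (0:ℝ) ≤ F := Nat.cast_nonneg _
    -- drop the sign
    have hsign : (-1 : ℝ) ^ (lam + k) * F ≤ F := by
      have h1 : (-1:ℝ) ^ (lam + k) ≤ 1 := by
        rcases Nat.even_or_odd (lam + k) with h | h
        · rw [h.neg_one_pow]
        · rw [h.neg_one_pow]; norm_num
      nlinarith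
    have step1 : σ ^ lam * ((-1 : ℝ) ^ (lam + k) * F / (D1 * D2 * D3))
        ≤ σ ^ lam * (F / (D1 * D2 * D3)) := by
      apply mul_le_mul_of_nonneg_left _ (pow_pos hσ lam).le
      exact div_le_div_of_nonneg_right hsign (by positivity)
    -- factorial bound
    have hsplit : v + 2 * k - 1 = v + (2 * k - 1) := by omega
    have hfact : F ≤ (v.factorial : ℝ) * D1 * Real.exp ((v:ℝ) + (2 * (k:ℝ) - 1)) := by
      have heq : (v + (2 * k - 1)).factorial
          = (v + (2 * k - 1)).choose v * v.factorial * (2 * k - 1).factorial := by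
        have := Nat.choose_mul_factorial_mul_factorial
          (Nat.le_add_right v (2 * k - 1))
        simpa [Nat.add_sub_cancel_left] using this.symm
      have hc : ((v + (2 * k - 1)).choose v : ℝ) ≤ Real.exp ((v:ℝ) + (2 * (k:ℝ) - 1)) := by
        have := choose_le_exp (v + (2 * k - 1)) v
        have hcast : ((v + (2 * k - 1) : ℕ) : ℝ) = (v:ℝ) + (2 * (k:ℝ) - 1) := by
          have h2k : 1 ≤ 2 * k := by omega
          push_cast [h2k]
          ring
        rwa [hcast] at this
      calc F = ((v + (2 * k - 1)).choose v : ℝ) * (v.factorial : ℝ) * D1 := by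
            rw [show F = ((v + (2 * k - 1)).factorial : ℝ) by rw [← hsplit]]
            rw [heq]; push_cast; ring
        _ ≤ Real.exp ((v:ℝ) + (2 * (k:ℝ) - 1)) * (v.factorial : ℝ) * D1 := by
            apply mul_le_mul_of_nonneg_right _ hD1.le
            exact mul_le_mul_of_nonneg_right hc (Nat.cast_nonneg _)
        _ = (v.factorial : ℝ) * D1 * Real.exp ((v:ℝ) + (2 * (k:ℝ) - 1)) := by ring
    have step2 : σ ^ lam * (F / (D1 * D2 * D3))
        ≤ (v.factorial : ℝ) * Real.exp ((v:ℝ) - 1) * (a k * b (lam - k)) := by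
      have hexp : Real.exp ((v:ℝ) + (2 * (k:ℝ) - 1))
          = Real.exp ((v:ℝ) - 1) * Real.exp (2 * (k:ℝ)) := by
        rw [← Real.exp_add]; ring_nf
      have hak : a k = σ ^ k * Real.exp (2 * (k:ℝ)) / D3 := by
        have h : (σ * Real.exp 1 ^ 2) ^ k = σ ^ k * Real.exp (2 * (k:ℝ)) := by
          rw [mul_pow, ← pow_mul, Real.exp_one_pow]
          push_cast; ring_nf
        simp only [ha, h]; rfl
      have hσlam : σ ^ lam = σ ^ k * σ ^ (lam - k) := by
        rw [← pow_add]; congr 1; omega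
      have hRHS : (v.factorial : ℝ) * Real.exp ((v:ℝ) - 1) * (a k * b (lam - k))
          = σ ^ k * σ ^ (lam - k) *
            ((v.factorial : ℝ) * D1 * Real.exp ((v:ℝ) + (2 * (k:ℝ) - 1)) / (D1 * D2 * D3)) := by
        rw [hak, hb, hexp]
        field_simp
        ring
      rw [hRHS, hσlam]
      apply mul_le_mul_of_nonneg_left _ (by positivity)
      exact div_le_div_of_nonneg_right hfact (by positivity)
    exact step1.trans step2
  -- Step 2: bound the double sum of a k * b (lam - k)
  have claimB : ∑ lam ∈ Finset.Icc 1 v, ∑ k ∈ Finset.Icc 1 lam, a k * b (lam - k)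
      ≤ Real.exp (σ * Real.exp 1 ^ 2) * Real.exp σ := by
    have hsig : ∑ lam ∈ Finset.Icc 1 v, ∑ k ∈ Finset.Icc 1 lam, a k * b (lam - k)
        = ∑ p ∈ (Finset.Icc 1 v).sigma (fun lam => Finset.Icc 1 lam),
            a p.2 * b (p.1 - p.2) :=
      Finset.sum_sigma' _ _ _
    set S := (Finset.Icc 1 v).sigma (fun lam => Finset.Icc 1 lam) with hS
    set φ : (Σ _ : ℕ, ℕ) → ℕ × ℕ := fun p => (p.2, p.1 - p.2) with hφ
    have hinj : ∀ x ∈ S, ∀ y ∈ S, φ x = φ y → x = y := by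
      intro x hx y hy hxy
      simp only [hS, Finset.mem_sigma, Finset.mem_Icc] at hx hy
      have h1 : x.2 = y.2 := congrArg Prod.fst hxy
      have h2 : x.1 - x.2 = y.1 - y.2 := congrArg Prod.snd hxy
      have : x.1 = y.1 := by omega
      exact Sigma.ext this (by simp [h1])
    have himg : ∑ p ∈ S, a p.2 * b (p.1 - p.2)
        = ∑ q ∈ S.image φ, a q.1 * b q.2 := by
      rw [Finset.sum_image hinj]
    have hsub : S.image φ ⊆ Finset.range (v+1) ×ˢ Finset.range (v+1) := by
      intro q hq
      simp only [Finset.mem_image, hS, Finset.mem_sigma, Finset.mem_Icc] at hq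
      obtain ⟨p, ⟨⟨h1, h2⟩, h3, h4⟩, rfl⟩ := hq
      simp only [Finset.mem_product, Finset.mem_range, hφ]
      omega
    have hle : ∑ q ∈ S.image φ, a q.1 * b q.2
        ≤ ∑ q ∈ Finset.range (v+1) ×ˢ Finset.range (v+1), a q.1 * b q.2 :=
      Finset.sum_le_sum_of_subset_of_nonneg hsub
        (fun q _ _ => mul_nonneg (ha0 q.1) (hb0 q.2))
    have hprod : ∑ q ∈ Finset.range (v+1) ×ˢ Finset.range (v+1), a q.1 * b q.2
        = (∑ k ∈ Finset.range (v+1), a k) * (∑ l ∈ Finset.range (v+1), b l) := by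
      rw [Finset.sum_mul_sum, Finset.sum_product]
    have hA : ∑ k ∈ Finset.range (v+1), a k ≤ Real.exp (σ * Real.exp 1 ^ 2) :=
      Real.sum_le_exp_of_nonneg hE2pos.le (v+1)
    have hB : ∑ l ∈ Finset.range (v+1), b l ≤ Real.exp σ :=
      Real.sum_le_exp_of_nonneg hσ.le (v+1)
    calc ∑ lam ∈ Finset.Icc 1 v, ∑ k ∈ Finset.Icc 1 lam, a k * b (lam - k)
        = ∑ q ∈ S.image φ, a q.1 * b q.2 := by rw [hsig, himg]
      _ ≤ (∑ k ∈ Finset.range (v+1), a k) * (∑ l ∈ Finset.range (v+1), b l) := by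
          rw [← hprod]; exact hle
      _ ≤ Real.exp (σ * Real.exp 1 ^ 2) * Real.exp σ := by
          apply mul_le_mul hA hB (Finset.sum_nonneg fun l _ => hb0 l) (Real.exp_pos _).le
  -- Combine
  calc ∑ lam ∈ Finset.Icc 1 v, σ ^ lam *
          ∑ k ∈ Finset.Icc 1 lam,
            (-1 : ℝ) ^ (lam + k) * ((v + 2 * k - 1).factorial : ℝ) /
              (((2 * k - 1).factorial : ℝ) * ((lam - k).factorial : ℝ) * (k.factorial : ℝ))
      ≤ ∑ lam ∈ Finset.Icc 1 v, ∑ k ∈ Finset.Icc 1 lam,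
          (v.factorial : ℝ) * Real.exp ((v:ℝ) - 1) * (a k * b (lam - k)) := by
        apply Finset.sum_le_sum
        intro lam hlam
        rw [Finset.mul_sum]
        exact Finset.sum_le_sum (fun k hk => key lam hlam k hk)
    _ = (v.factorial : ℝ) * Real.exp ((v:ℝ) - 1) *
          ∑ lam ∈ Finset.Icc 1 v, ∑ k ∈ Finset.Icc 1 lam, a k * b (lam - k) := by
        rw [Finset.mul_sum]
        congr 1; ext lam
        rw [Finset.mul_sum]
    _ ≤ (v.factorial : ℝ) * Real.exp ((v:ℝ) - 1) *
          (Real.exp (σ * Real.exp 1 ^ 2) * Real.exp σ) := by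
        apply mul_le_mul_of_nonneg_left claimB
        positivity
    _ = (v.factorial : ℝ) * Real.exp ((v : ℝ) + σ * Real.exp 1 ^ 2 + σ - 1) := by
        rw [mul_assoc, ← Real.exp_add, ← Real.exp_add]
        ring_nf
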